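/- Let f be a nonzero polynomial over ℂ. If there exists a rational function g ∈ ℂ(x) with g' = 1/f, then f is a monomial, i.e., f = a(x - b)^d for some a, b ∈ ℂ and d ∈ ℕ. -/

import Mathlib

open Polynomial

/-- The formal derivative of a rational function, defined via the quotient rule
on the canonical numerator and denominator. -/
noncomputable def rderiv (r : RatFunc ℂ) : RatFunc ℂ :=
  algebraMap (Polynomial ℂ) (RatFunc ℂ)
      (Polynomial.derivative r.num * r.denom - r.num * Polynomial.derivative r.denom) /
    algebraMap (Polynomial ℂ) (RatFunc ℂ) (r.denom ^ 2)

private lemma deriv_facts (P : Polynomial ℂ) (h : P.natDegree ≠ 0) :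
    (derivative P).natDegree = P.natDegree - 1 ∧
      (derivative P).leadingCoeff = (P.natDegree : ℂ) * P.leadingCoeff := by
  set M := P.natDegree with hM
  have hM1 : 1 ≤ M := Nat.one_le_iff_ne_zero.mpr h
  have hPne : P ≠ 0 := fun h0 => h (by simp [h0, hM])
  have hlc : P.leadingCoeff ≠ 0 := leadingCoeff_ne_zero.mpr hPne
  have hco : (derivative P).coeff (M - 1) = (M : ℂ) * P.leadingCoeff := by
    rw [coeff_derivative]
    have h1 : M - 1 + 1 = M := by omega
    rw [h1]
    have h2 : ((M - 1 : ℕ) : ℂ) + 1 = (M : ℂ) := by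
      rw [Nat.cast_sub hM1, Nat.cast_one]; ring
    rw [h2, leadingCoeff, ← hM, mul_comm]
  have hcone : (derivative P).coeff (M - 1) ≠ 0 := by
    rw [hco]
    exact mul_ne_zero (Nat.cast_ne_zero.mpr (by omega)) hlc
  have hge : M - 1 ≤ (derivative P).natDegree := le_natDegree_of_ne_zero hcone
  have hle : (derivative P).natDegree ≤ M - 1 := natDegree_derivative_le P
  have hdeg : (derivative P).natDegree = M - 1 := le_antisymm hle hge
  exact ⟨hdeg, by rw [leadingCoeff, hdeg, hco]⟩

theorem monomial_of_rational_antiderivative (f : Polynomial ℂ) (hf : f ≠ 0)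
    (g : RatFunc ℂ)
    (hg : rderiv g = (algebraMap (Polynomial ℂ) (RatFunc ℂ) f)⁻¹) :
    ∃ (a b : ℂ) (d : ℕ), f = Polynomial.C a * (Polynomial.X - Polynomial.C b) ^ d := by
  classical
  set p := g.num with hpdef
  set q := g.denom with hqdef
  have hqne : q ≠ 0 := g.denom_ne_zero
  have hqm : q.Monic := g.monic_denom
  set A : Polynomial ℂ := derivative p * q - p * derivative q with hAdef
  -- The fundamental polynomial identity f * A = q ^ 2
  have key : f * A = q ^ 2 := by
    apply RatFunc.algebraMap_injective ℂ
    have hfz : algebraMap (Polynomial ℂ) (RatFunc ℂ) f ≠ 0 :=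
      RatFunc.algebraMap_ne_zero hf
    have hqz : algebraMap (Polynomial ℂ) (RatFunc ℂ) q ≠ 0 :=
      RatFunc.algebraMap_ne_zero hqne
    have h1 : algebraMap (Polynomial ℂ) (RatFunc ℂ) A /
        algebraMap (Polynomial ℂ) (RatFunc ℂ) (q ^ 2) =
        (algebraMap (Polynomial ℂ) (RatFunc ℂ) f)⁻¹ := hg
    rw [map_mul, map_pow]
    field_simp at h1
    linear_combination h1 + map_pow (algebraMap (Polynomial ℂ) (RatFunc ℂ)) q 2
  have hAne : A ≠ 0 := by
    intro h0
    apply pow_ne_zero 2 hqne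
    rw [← key, h0, mul_zero]
  -- every root of A is a root of q
  have hrootsA : ∀ z : ℂ, A.eval z = 0 → q.eval z = 0 := by
    intro z hz
    have := congrArg (eval z) key
    simp only [eval_mul, eval_pow, hz, mul_zero] at this
    exact pow_eq_zero_iff (n := 2) (by norm_num) |>.mp this.symm
  -- every root of f is a root of q
  have hrootsf : ∀ z : ℂ, f.eval z = 0 → q.eval z = 0 := by
    intro z hz
    have := congrArg (eval z) key
    simp only [eval_mul, eval_pow, hz, zero_mul] at this
    exact pow_eq_zero_iff (n := 2) (by norm_num) |>.mp this.symm
  -- root multiplicity of A at roots of q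
  have hmul : ∀ z : ℂ, q.eval z = 0 →
      rootMultiplicity z A = rootMultiplicity z q - 1 := by
    intro z hz
    set k := rootMultiplicity z q with hk
    have hk1 : 1 ≤ k := (rootMultiplicity_pos hqne).mpr hz
    have hpz : p.eval z ≠ 0 := by
      obtain ⟨a, b, hab⟩ := g.isCoprime_num_denom
      intro h0
      have := congrArg (eval z) hab
      simp only [eval_add, eval_mul, eval_one, ← hpdef, ← hqdef, h0, hz,
        mul_zero, add_zero] at this
      exact one_ne_zero this.symm
    have hq'mul : rootMultiplicity z (derivative q) = k - 1 :=
      derivative_rootMultiplicity_of_root hz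
    -- (X - C z)^(k-1) divides A
    have dA : (X - C z) ^ (k - 1) ∣ A := by
      have d1 : (X - C z) ^ (k - 1) ∣ derivative p * q :=
        Dvd.dvd.mul_left ((pow_dvd_pow _ (Nat.sub_le k 1)).trans
          (pow_rootMultiplicity_dvd q z)) _
      have d2 : (X - C z) ^ (k - 1) ∣ p * derivative q :=
        Dvd.dvd.mul_left (hq'mul ▸ pow_rootMultiplicity_dvd (derivative q) z) _
      exact dvd_sub d1 d2
    -- (X - C z)^k does not divide A
    have ndA : ¬ (X - C z) ^ k ∣ A := by
      intro hdvd
      have hq'ne : derivative q ≠ 0 := by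
        intro h0
        have h1 := eq_C_of_natDegree_eq_zero (natDegree_eq_zero_of_derivative_eq_zero h0)
        rw [h1, eval_C] at hz
        exact hqne (by rw [h1, hz, map_zero])
      have hpq'ne : p * derivative q ≠ 0 :=
        mul_ne_zero (RatFunc.num_ne_zero (by
          intro h0
          apply hAne
          rw [hAdef, hpdef, hqdef, h0]
          simp)) hq'ne
      have h1 : (X - C z) ^ k ∣ p * derivative q := by
        have h2 : (X - C z) ^ k ∣ derivative p * q :=
          Dvd.dvd.mul_left (pow_rootMultiplicity_dvd q z) _
        have h3 : p * derivative q = derivative p * q - A := by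
          rw [hAdef]; ring
        rw [h3]
        exact dvd_sub h2 hdvd
      have hle := (le_rootMultiplicity_iff hpq'ne).mpr h1
      rw [rootMultiplicity_mul hpq'ne, rootMultiplicity_eq_zero hpz,
        hq'mul, zero_add] at hle
      omega
    have hge : k - 1 ≤ rootMultiplicity z A := (le_rootMultiplicity_iff hAne).mpr dA
    have hle : rootMultiplicity z A ≤ k - 1 := by
      rw [rootMultiplicity_le_iff hAne]
      have : k - 1 + 1 = k := by omega
      rw [this]
      exact ndA
    omega
  set K := q.natDegree with hKdef
  set S := q.roots.toFinset with hSdef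
  set n := S.card with hndef
  -- counting: card of roots of q
  have hqcard : (Multiset.card q.roots : ℕ) = K :=
    splits_iff_card_roots.mp (IsAlgClosed.splits q)
  have hAcard : (Multiset.card A.roots : ℕ) = A.natDegree :=
    splits_iff_card_roots.mp (IsAlgClosed.splits A)
  have hKsum : ∑ x ∈ S, rootMultiplicity x q = K := by
    rw [← hqcard, ← Multiset.toFinset_sum_count_eq q.roots]
    exact Finset.sum_congr rfl fun x _ => (count_roots q).symm
  -- natDegree A = K - n
  have hdegA : A.natDegree = K - n := by
    have hsub : A.roots.toFinset ⊆ S := by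
      intro x hx
      rw [Multiset.mem_toFinset, mem_roots hAne] at hx
      rw [hSdef, Multiset.mem_toFinset, mem_roots hqne]
      exact hrootsA x hx
    have h1 : A.natDegree = ∑ x ∈ S, rootMultiplicity x A := by
      rw [← hAcard, ← Multiset.toFinset_sum_count_eq A.roots]
      rw [Finset.sum_subset hsub]
      · exact Finset.sum_congr rfl fun x _ => count_roots A
      · intro x _ hx
        exact Multiset.count_eq_zero_of_notMem (fun h => hx (Multiset.mem_toFinset.mpr h))
    have h2 : ∀ x ∈ S, rootMultiplicity x A = rootMultiplicity x q - 1 := by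
      intro x hx
      rw [hSdef, Multiset.mem_toFinset, mem_roots hqne] at hx
      exact hmul x hx
    have h3 : ∀ x ∈ S, 1 ≤ rootMultiplicity x q := by
      intro x hx
      rw [hSdef, Multiset.mem_toFinset, mem_roots hqne] at hx
      exact (rootMultiplicity_pos hqne).mpr hx
    rw [h1, Finset.sum_congr rfl h2]
    have h4 : ∑ x ∈ S, (rootMultiplicity x q - 1) + n =
        ∑ x ∈ S, rootMultiplicity x q := by
      have h5 : ∑ x ∈ S, (rootMultiplicity x q - 1) + ∑ _x ∈ S, 1 =
          ∑ x ∈ S, rootMultiplicity x q := by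
        rw [← Finset.sum_add_distrib]
        exact Finset.sum_congr rfl fun x hx => by have := h3 x hx; omega
      simpa using h5
    omega
  -- case q constant
  by_cases hK0 : K = 0
  · have hq1 : q = 1 := hqm.natDegree_eq_zero.mp hK0
    rw [hq1, one_pow] at key
    obtain ⟨a, _, hfa⟩ := Polynomial.isUnit_iff.mp (IsUnit.of_mul_eq_one A key)
    exact ⟨a, 0, 0, by rw [← hfa]; simp⟩
  -- case q nonconstant; show n = 1
  have hK1 : 1 ≤ K := by omega
  have hn1 : 1 ≤ n := by
    obtain ⟨z, hz⟩ := Complex.exists_root (f := q)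
      (by rw [degree_eq_natDegree hqne]; exact_mod_cast hK1)
    have : z ∈ S := by
      rw [hSdef, Multiset.mem_toFinset, mem_roots hqne]; exact hz
    exact Finset.card_pos.mpr ⟨z, this⟩
  have hnK : n ≤ K := by
    rw [hndef, hSdef, ← hqcard]
    exact Multiset.toFinset_card_le q.roots
  -- derivative q facts
  obtain ⟨hq'deg, hq'lc⟩ := deriv_facts q (by omega)
  have hq'ne : derivative q ≠ 0 := by
    intro h0
    rw [h0, leadingCoeff_zero] at hq'lc
    have : (K : ℂ) ≠ 0 := Nat.cast_ne_zero.mpr (by omega)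
    exact this (by
      have := hq'lc.symm
      rwa [hqm.leadingCoeff, mul_one] at this)
  -- normalized numerator
  set P : Polynomial ℂ := p - C (p.coeff K) * q with hPdef
  have hPA : derivative P * q - P * derivative q = A := by
    rw [hPdef, hAdef]
    simp only [derivative_sub, derivative_C_mul]
    ring
  have hPne : P ≠ 0 := by
    intro h0
    apply hAne
    rw [← hPA, h0]
    simp
  have hPK : P.coeff K = 0 := by
    have hq1 : q.coeff K = 1 := hqm.coeff_natDegree
    rw [hPdef, coeff_sub, coeff_C_mul, hq1, mul_one, sub_self]
  set M := P.natDegree with hMdef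
  have hMK : M ≠ K := by
    intro h0
    apply hPne
    apply leadingCoeff_eq_zero.mp
    rw [leadingCoeff, ← hMdef, h0, hPK]
  have hn : n = 1 := by
    by_cases hM0 : M = 0
    · -- P is a nonzero constant, A = - P * derivative q
      have hPc : derivative P = 0 := by
        obtain ⟨c, hc⟩ := natDegree_eq_zero.mp hM0
        rw [← hc]; exact derivative_C
      have hA2 : A = -(P * derivative q) := by rw [← hPA, hPc]; ring
      obtain ⟨c, hc⟩ := natDegree_eq_zero.mp hM0
      have hcne : c ≠ 0 := by
        intro h0; apply hPne; rw [← hc, h0, map_zero]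
      have : A.natDegree = K - 1 := by
        rw [hA2, natDegree_neg, ← hc, natDegree_C_mul hcne, hq'deg]
      omega
    · -- M ≥ 1 leads to a contradiction
      exfalso
      obtain ⟨hP'deg, hP'lc⟩ := deriv_facts P hM0
      have hlcP : P.leadingCoeff ≠ 0 := leadingCoeff_ne_zero.mpr hPne
      have hP'ne : derivative P ≠ 0 := by
        intro h0
        rw [h0, leadingCoeff_zero] at hP'lc
        exact mul_ne_zero (Nat.cast_ne_zero.mpr hM0) hlcP hP'lc.symm
      set N := M + K - 1 with hNdef
      have c1 : (derivative P * q).coeff N = (M : ℂ) * P.leadingCoeff := by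
        have := coeff_mul_degree_add_degree (derivative P) q
        rw [hP'deg, ← hMdef, ← hKdef] at this
        have hidx : M - 1 + K = N := by omega
        rw [hidx] at this
        rw [this, hP'lc, hqm.leadingCoeff, mul_one]
      have c2 : (P * derivative q).coeff N = P.leadingCoeff * (K : ℂ) := by
        have := coeff_mul_degree_add_degree P (derivative q)
        rw [hq'deg, ← hMdef, ← hKdef] at this
        have hidx : M + (K - 1) = N := by omega
        rw [hidx] at this
        rw [this, hq'lc, hqm.leadingCoeff, mul_one]
      have cA : A.coeff N = P.leadingCoeff * ((M : ℂ) - (K : ℂ)) := by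
        rw [← hPA, coeff_sub, c1, c2]
        ring
      have cAne : A.coeff N ≠ 0 := by
        rw [cA]
        apply mul_ne_zero hlcP
        intro h0
        apply hMK
        have : (M : ℂ) = (K : ℂ) := by linear_combination h0
        exact_mod_cast this
      have hNle : N ≤ A.natDegree := le_natDegree_of_ne_zero cAne
      omega
  -- conclude: q has a single root b, so f = C a * (X - C b) ^ d
  obtain ⟨b, hb⟩ := Finset.card_eq_one.mp hn
  have hfb : ∀ z ∈ f.roots, z = b := by
    intro z hz
    rw [mem_roots hf] at hz
    have : z ∈ S := by
      rw [hSdef, Multiset.mem_toFinset, mem_roots hqne]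
      exact hrootsf z hz
    rw [hb, Finset.mem_singleton] at this
    exact this
  refine ⟨f.leadingCoeff, b, Multiset.card f.roots, ?_⟩
  have hsp := Splits.eq_prod_roots (IsAlgClosed.splits f)
  have hrepl : f.roots.map (fun a => X - C a) =
      Multiset.replicate (Multiset.card f.roots) (X - C b) := by
    rw [Multiset.eq_replicate]
    constructor
    · rw [Multiset.card_map]
    · intro x hx
      obtain ⟨z, hz, rfl⟩ := Multiset.mem_map.mp hx
      rw [hfb z hz]
  rw [hrepl, Multiset.prod_replicate] at hsp
  exact hsp
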